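/- Let B > 0, 0 < L < B, Δ > 0 and m ≥ 1 be given, and let X₁, …, X_m be independent identically distributed real random variables on a probability space such that almost surely 0 ≤ X_n ≤ B for each n, almost surely for each n either X_n = B or X_n ≥ L, and E[X₁] ≤ Δ·B. Let 0 < λ < 1, set λ̃ = √(log(1/λ)/(2Δ²m)) and c = (1 − Δ(1 + λ̃)) / (1 − L/B), and let K = #{ n ∈ {1,…,m} : X_n < B } be the number of indices with X_n < B. Then P(K ≥ c·m) ≥ 1 − λ. -/

import Mathlib

open MeasureTheory ProbabilityTheory

open Real

lemma aux_D_pos {p : ℝ} (hp0 : 0 ≤ p) (hp1 : p ≤ 1) (u : ℝ) :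
    0 < 1 - p + p * Real.exp u := by
  rcases le_total (Real.exp u) 1 with h | h
  · nlinarith [Real.exp_pos u]
  · nlinarith [Real.exp_pos u]

lemma aux_analytic {p : ℝ} (hp0 : 0 ≤ p) (hp1 : p ≤ 1) (u : ℝ) :
    Real.log (1 - p + p * Real.exp u) ≤ p * u + u ^ 2 / 8 := by
  set D : ℝ → ℝ := fun x => 1 - p + p * Real.exp x with hD_def
  have hD : ∀ x, 0 < D x := fun x => aux_D_pos hp0 hp1 x
  set h : ℝ → ℝ := fun x => p * x + x ^ 2 / 8 - Real.log (D x) with hh_def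
  set h' : ℝ → ℝ := fun x => p + x / 4 - p * Real.exp x / D x with hh'_def
  have hDd : ∀ x, HasDerivAt D (p * Real.exp x) x := fun x => by
    exact ((Real.hasDerivAt_exp x).const_mul p).const_add (1 - p)
  have hderiv : ∀ x, HasDerivAt h (h' x) x := by
    intro x
    have hlog : HasDerivAt (fun x => Real.log (D x)) ((D x)⁻¹ * (p * Real.exp x)) x :=
      (Real.hasDerivAt_log (hD x).ne').comp x (hDd x)
    have h1 : HasDerivAt (fun x : ℝ => p * x + x ^ 2 / 8)
        (p * 1 + (2 : ℕ) * x ^ 1 / 8) x :=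
      ((hasDerivAt_id x).const_mul p).add ((hasDerivAt_pow 2 x).div_const 8)
    have := h1.sub hlog
    refine this.congr_deriv ?_
    simp only [hh'_def]
    push_cast
    ring
  have hderiv' : ∀ x, HasDerivAt h' (1 / 4 - p * Real.exp x * (1 - p) / (D x) ^ 2) x := by
    intro x
    have hq : HasDerivAt (fun x => p * Real.exp x / D x)
        ((p * Real.exp x * D x - p * Real.exp x * (p * Real.exp x)) / (D x) ^ 2) x :=
      ((Real.hasDerivAt_exp x).const_mul p).div (hDd x) (hD x).ne'
    have h1 : HasDerivAt (fun x : ℝ => p + x / 4) (0 + 1 / 4) x :=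
      (hasDerivAt_const x p).add ((hasDerivAt_id x).div_const 4)
    have := h1.sub hq
    refine this.congr_deriv ?_
    have hx : D x = 1 - p + p * Real.exp x := rfl
    rw [hx]
    ring
  have hmono : Monotone h' := by
    apply monotone_of_deriv_nonneg
    · exact fun x => (hderiv' x).differentiableAt
    · intro x
      rw [(hderiv' x).deriv]
      have hx : D x = 1 - p + p * Real.exp x := rfl
      rw [sub_nonneg, div_le_iff₀ (pow_pos (hD x) 2), hx]
      nlinarith [sq_nonneg ((1 - p) - p * Real.exp x), Real.exp_pos x]
  have h'0 : h' 0 = 0 := by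
    have : D 0 = 1 := by simp [hD_def]
    simp [hh'_def, this]
  have h0 : h 0 = 0 := by
    have : D 0 = 1 := by simp [hD_def]
    simp [hh_def, this]
  have hcont : Continuous h := by
    have : Differentiable ℝ h := fun x => (hderiv x).differentiableAt
    exact this.continuous
  have hfinal : ∀ u, 0 ≤ h u := by
    intro u
    rcases le_total 0 u with hu | hu
    · have hmonoOn : MonotoneOn h (Set.Ici 0) := by
        apply monotoneOn_of_deriv_nonneg (convex_Ici 0) hcont.continuousOn
          (fun x _ => (hderiv x).differentiableAt.differentiableWithinAt)
        intro x hx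
        rw [(hderiv x).deriv, ← h'0]
        exact hmono (le_of_lt (by simpa using hx))
      have := hmonoOn (Set.self_mem_Ici) (by exact hu) hu
      rwa [h0] at this
    · have hantiOn : AntitoneOn h (Set.Iic 0) := by
        apply antitoneOn_of_deriv_nonpos (convex_Iic 0) hcont.continuousOn
          (fun x _ => (hderiv x).differentiableAt.differentiableWithinAt)
        intro x hx
        rw [(hderiv x).deriv, ← h'0]
        exact hmono (le_of_lt (by simpa using hx))
      have := hantiOn (by exact hu) (Set.self_mem_Iic) hu
      rwa [h0] at this
  have := hfinal u
  simp only [hh_def] at this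
  linarith

lemma aux_integrable_exp {Ω : Type*} [MeasurableSpace Ω] {μ : Measure Ω}
    [IsProbabilityMeasure μ] {Y : Ω → ℝ} {B : ℝ}
    (hY : AEMeasurable Y μ) (hr : ∀ᵐ ω ∂μ, 0 ≤ Y ω ∧ Y ω ≤ B) (s : ℝ) :
    Integrable (fun ω => Real.exp (s * Y ω)) μ := by
  refine Integrable.mono' (integrable_const (Real.exp (|s| * B)))
    ((measurable_exp.comp_aemeasurable (hY.const_mul s)).aestronglyMeasurable) ?_
  filter_upwards [hr] with ω hω
  rw [Real.norm_eq_abs, Real.abs_exp, Real.exp_le_exp]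
  calc s * Y ω ≤ |s * Y ω| := le_abs_self _
    _ = |s| * |Y ω| := abs_mul _ _
    _ = |s| * Y ω := by rw [abs_of_nonneg hω.1]
    _ ≤ |s| * B := by nlinarith [abs_nonneg s, hω.1, hω.2]

lemma aux_mgf_le {Ω : Type*} [MeasurableSpace Ω] {μ : Measure Ω}
    [IsProbabilityMeasure μ] {Y : Ω → ℝ} {B : ℝ} (hB : 0 < B)
    (hY : AEMeasurable Y μ) (hr : ∀ᵐ ω ∂μ, 0 ≤ Y ω ∧ Y ω ≤ B) (s : ℝ) :
    mgf Y μ s ≤ Real.exp (s * (∫ ω, Y ω ∂μ) + s ^ 2 * B ^ 2 / 8) := by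
  have hYint : Integrable Y μ := by
    refine Integrable.mono' (integrable_const B) hY.aestronglyMeasurable ?_
    filter_upwards [hr] with ω hω
    rw [Real.norm_eq_abs, abs_of_nonneg hω.1]; exact hω.2
  set I : ℝ := ∫ ω, Y ω ∂μ with hI
  have hI0 : 0 ≤ I := integral_nonneg_of_ae (hr.mono fun ω h => h.1)
  have hIB : I ≤ B := by
    calc I ≤ ∫ _ω, B ∂μ := integral_mono_ae hYint (integrable_const B)
              (hr.mono fun ω h => h.2)
      _ = B := by simp
  set p : ℝ := I / B with hp
  have hp0 : 0 ≤ p := div_nonneg hI0 hB.le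
  have hp1 : p ≤ 1 := (div_le_one hB).2 hIB
  set q : ℝ := (Real.exp (s * B) - 1) / B with hq
  have hpt : ∀ᵐ ω ∂μ, Real.exp (s * Y ω) ≤ 1 + Y ω * q := by
    filter_upwards [hr] with ω hω
    have hθ0 : 0 ≤ Y ω / B := div_nonneg hω.1 hB.le
    have hθ1 : Y ω / B ≤ 1 := (div_le_one hB).2 hω.2
    have hconv := convexOn_exp.2 (Set.mem_univ (0:ℝ)) (Set.mem_univ (s * B))
      (by linarith : 0 ≤ 1 - Y ω / B) hθ0 (by ring)
    simp only [smul_eq_mul, mul_zero, zero_add, Real.exp_zero, mul_one] at hconv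
    have harg : Y ω / B * (s * B) = s * Y ω := by field_simp
    rw [harg] at hconv
    calc Real.exp (s * Y ω) ≤ (1 - Y ω / B) + Y ω / B * Real.exp (s * B) := hconv
      _ = 1 + Y ω * q := by rw [hq]; field_simp; ring
  have hrhs_int : Integrable (fun ω => 1 + Y ω * q) μ :=
    (integrable_const 1).add (hYint.mul_const q)
  have h1 : mgf Y μ s ≤ ∫ ω, (1 + Y ω * q) ∂μ :=
    integral_mono_ae (aux_integrable_exp hY hr s) hrhs_int hpt
  have h2 : ∫ ω, (1 + Y ω * q) ∂μ = 1 - p + p * Real.exp (s * B) := by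
    rw [integral_add (integrable_const 1) (hYint.mul_const q), integral_const,
      integral_mul_const]
    simp only [probReal_univ, ENNReal.toReal_one, smul_eq_mul, one_mul]
    rw [hq, hp, ← hI]
    field_simp
    ring
  have hpos : 0 < 1 - p + p * Real.exp (s * B) := aux_D_pos hp0 hp1 (s * B)
  calc mgf Y μ s ≤ 1 - p + p * Real.exp (s * B) := by rw [← h2]; exact h1
    _ = Real.exp (Real.log (1 - p + p * Real.exp (s * B))) := (Real.exp_log hpos).symm
    _ ≤ Real.exp (p * (s * B) + (s * B) ^ 2 / 8) :=
        Real.exp_le_exp.2 (aux_analytic hp0 hp1 (s * B))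
    _ = Real.exp (s * I + s ^ 2 * B ^ 2 / 8) := by
        congr 1
        rw [hp]; field_simp

/-- Concentration of the number of non-abandoning users in the exploration set:
`X n` is the budget consumed by user `n` (which is `B` if the user abandons and at
least `L` otherwise), and `K` counts the users with `X n < B`. -/
theorem stmt_9 {Ω : Type*} [MeasurableSpace Ω] (μ : Measure Ω) [IsProbabilityMeasure μ]
    (B L Δ : ℝ) (hB : 0 < B) (hL0 : 0 < L) (hLB : L < B) (hΔ : 0 < Δ)
    (m : ℕ) (hm : 1 ≤ m)
    (X : Fin m → Ω → ℝ)
    (hindep : iIndepFun X μ)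
    (hident : ∀ i j, IdentDistrib (X i) (X j) μ μ)
    (hrange : ∀ n, ∀ᵐ ω ∂μ, 0 ≤ X n ω ∧ X n ω ≤ B)
    (halt : ∀ n, ∀ᵐ ω ∂μ, X n ω = B ∨ L ≤ X n ω)
    (hmean : ∀ n, ∫ ω, X n ω ∂μ ≤ Δ * B)
    (lam : ℝ) (hlam0 : 0 < lam) (hlam1 : lam < 1)
    (lamt c : ℝ)
    (hlamt : lamt = Real.sqrt (Real.log (1 / lam) / (2 * Δ ^ 2 * m)))
    (hc : c = (1 - Δ * (1 + lamt)) / (1 - L / B))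
    (K : Ω → ℕ)
    (hK : ∀ ω, K ω = (Finset.univ.filter (fun n => X n ω < B)).card) :
    ENNReal.ofReal (1 - lam) ≤ μ {ω | c * m ≤ (K ω : ℝ)} := by
  classical
  have hm0 : (0:ℝ) < m := by exact_mod_cast hm
  -- measurable versions
  have hAE : ∀ i, AEMeasurable (X i) μ := fun i => (hident i i).aemeasurable_fst
  set X' : Fin m → Ω → ℝ := fun i => (hAE i).mk (X i) with hX'def
  have hX'meas : ∀ i, Measurable (X' i) := fun i => (hAE i).measurable_mk
  have hXX' : ∀ i, X i =ᵐ[μ] X' i := fun i => (hAE i).ae_eq_mk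
  have hall : ∀ᵐ ω ∂μ, ∀ i, X i ω = X' i ω := (ae_all_iff).2 fun i => hXX' i
  -- transfer independence
  have hindep' : iIndepFun X' μ := by
    rw [iIndepFun_iff_measure_inter_preimage_eq_mul] at hindep ⊢
    intro S sets hsets
    have e1 : ∀ i : Fin m, μ (X' i ⁻¹' sets i) = μ (X i ⁻¹' sets i) := by
      intro i
      refine measure_congr (Filter.eventuallyEq_set.2 ?_)
      filter_upwards [hXX' i] with ω hω
      simp [Set.mem_preimage, hω]
    have e2 : μ (⋂ i ∈ S, X' i ⁻¹' sets i) = μ (⋂ i ∈ S, X i ⁻¹' sets i) := by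
      refine measure_congr (Filter.eventuallyEq_set.2 ?_)
      filter_upwards [hall] with ω hω
      simp only [Set.mem_iInter, Set.mem_preimage]
      constructor <;> intro h i hi
      · rw [hω i]; exact h i hi
      · rw [← hω i]; exact h i hi
    rw [e2, hindep S hsets]
    exact (Finset.prod_congr rfl fun i _ => (e1 i).symm)
  have hrange' : ∀ i, ∀ᵐ ω ∂μ, 0 ≤ X' i ω ∧ X' i ω ≤ B := by
    intro i
    filter_upwards [hrange i, hXX' i] with ω h1 h2
    rw [← h2]; exact h1
  -- parameters
  set s : ℝ := 4 * Δ * lamt / B with hs_def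
  have hlog0 : 0 ≤ Real.log (1 / lam) := by
    apply Real.log_nonneg
    rw [le_div_iff₀ hlam0]
    linarith
  have hlamt0 : 0 ≤ lamt := hlamt ▸ Real.sqrt_nonneg _
  have hlamt_sq : lamt ^ 2 = Real.log (1 / lam) / (2 * Δ ^ 2 * m) := by
    rw [hlamt, sq_sqrt]
    positivity
  have hs0 : 0 ≤ s := by positivity
  set ε : ℝ := Δ * B * (1 + lamt) * m with hε_def
  -- integrability
  have hint : ∀ i, Integrable (fun ω => Real.exp (s * X' i ω)) μ := fun i =>
    aux_integrable_exp (hX'meas i).aemeasurable (hrange' i) s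
  -- mgf bounds
  have hmgf_each : ∀ i, mgf (X' i) μ s ≤ Real.exp (s * (Δ * B) + s ^ 2 * B ^ 2 / 8) := by
    intro i
    refine (aux_mgf_le hB (hX'meas i).aemeasurable (hrange' i) s).trans ?_
    apply Real.exp_le_exp.2
    have hint' : ∫ ω, X' i ω ∂μ = ∫ ω, X i ω ∂μ := integral_congr_ae (hXX' i).symm
    have := hmean i
    nlinarith [hs0, this, hint'.le, hint'.ge]
  have hmgf_sum : mgf (∑ i, X' i) μ s ≤ Real.exp (m * (s * (Δ * B) + s ^ 2 * B ^ 2 / 8)) := by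
    rw [hindep'.mgf_sum hX'meas Finset.univ]
    calc ∏ i, mgf (X' i) μ s ≤ ∏ _i : Fin m, Real.exp (s * (Δ * B) + s ^ 2 * B ^ 2 / 8) :=
          Finset.prod_le_prod (fun i _ => mgf_nonneg) (fun i _ => hmgf_each i)
      _ = Real.exp (m * (s * (Δ * B) + s ^ 2 * B ^ 2 / 8)) := by
          rw [Finset.prod_const, Finset.card_univ, Fintype.card_fin, ← Real.exp_nat_mul]
  -- Chernoff
  set A : Set Ω := {ω | ε ≤ (∑ i, X' i) ω} with hA_def
  have hSmeas : Measurable (∑ i : Fin m, X' i) := by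
    have : Measurable fun a => ∑ i : Fin m, X' i a :=
      Finset.measurable_sum Finset.univ fun i _ => hX'meas i
    convert this using 1
    ext a
    simp
  have hAmeas : MeasurableSet A := measurableSet_le measurable_const hSmeas
  have hcher : (μ A).toReal ≤ lam := by
    have h1 := measure_ge_le_exp_mul_mgf (X := ∑ i, X' i) (μ := μ) (t := s) ε hs0
      (hindep'.integrable_exp_mul_sum hX'meas (fun i _ => hint i))
    refine h1.trans ?_
    calc Real.exp (-s * ε) * mgf (∑ i, X' i) μ s
        ≤ Real.exp (-s * ε) * Real.exp (m * (s * (Δ * B) + s ^ 2 * B ^ 2 / 8)) := by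
          exact mul_le_mul_of_nonneg_left hmgf_sum (Real.exp_nonneg _)
      _ = Real.exp (-s * ε + m * (s * (Δ * B) + s ^ 2 * B ^ 2 / 8)) := (Real.exp_add _ _).symm
      _ = lam := by
          have hexp : -s * ε + m * (s * (Δ * B) + s ^ 2 * B ^ 2 / 8)
              = -(2 * Δ ^ 2 * m * lamt ^ 2) := by
            rw [hs_def, hε_def]
            field_simp
            ring
          rw [hexp, hlamt_sq]
          have h3 : (2 * Δ ^ 2 * (m:ℝ)) * (Real.log (1 / lam) / (2 * Δ ^ 2 * (m:ℝ)))
              = Real.log (1 / lam) := by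
            have h2 : 2 * Δ ^ 2 * (m:ℝ) ≠ 0 := by positivity
            field_simp
          rw [h3, Real.log_div one_ne_zero (ne_of_gt hlam0), Real.log_one]
          simp [Real.exp_log hlam0]
  have hμA : μ A ≤ ENNReal.ofReal lam :=
    (ENNReal.le_ofReal_iff_toReal_le (measure_ne_top μ A) hlam0.le).2 hcher
  -- a.e. inclusion of Aᶜ in the goal set
  have hsub : Aᶜ ≤ᵐ[μ] {ω | c * m ≤ (K ω : ℝ)} := by
    filter_upwards [hall, (ae_all_iff).2 hrange, (ae_all_iff).2 halt] with ω heq hr ha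
    intro hωA
    have hSlt : ∑ i, X i ω < ε := by
      have : ¬ (ε ≤ (∑ i, X' i) ω) := hωA
      rw [Finset.sum_apply] at this
      push_neg at this
      refine lt_of_le_of_lt (le_of_eq ?_) this
      exact Finset.sum_congr rfl fun i _ => heq i
    -- counting bound
    set F : Finset (Fin m) := Finset.univ.filter (fun n => X n ω < B) with hF_def
    have hKF : (K ω : ℝ) = (F.card : ℝ) := by rw [hK ω]
    have hsplit : ∑ i ∈ F, X i ω + ∑ i ∈ Finset.univ.filter (fun n => ¬ X n ω < B), X i ω
        = ∑ i, X i ω := Finset.sum_filter_add_sum_filter_not _ _ _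
    have hbound1 : (L : ℝ) * F.card ≤ ∑ i ∈ F, X i ω := by
      rw [mul_comm]
      calc (F.card : ℝ) * L = ∑ _i ∈ F, L := by rw [Finset.sum_const, nsmul_eq_mul]
        _ ≤ ∑ i ∈ F, X i ω := by
            refine Finset.sum_le_sum fun i hi => ?_
            have hiF : X i ω < B := by simpa [hF_def] using hi
            rcases ha i with h | h
            · exact absurd h (ne_of_lt hiF)
            · exact h
    have hbound2 : (B : ℝ) * (Finset.univ.filter (fun n => ¬ X n ω < B)).card
        = ∑ i ∈ Finset.univ.filter (fun n => ¬ X n ω < B), X i ω := by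
      rw [mul_comm]
      rw [Finset.sum_congr rfl (fun i hi => ?_), Finset.sum_const, nsmul_eq_mul]
      have : ¬ X i ω < B := by simpa using hi
      exact le_antisymm (hr i).2 (not_lt.1 this)
    have hcards : (F.card : ℝ) + ((Finset.univ.filter (fun n => ¬ X n ω < B)).card : ℝ)
        = m := by
      have := Finset.card_filter_add_card_filter_not
        (s := Finset.univ) (p := fun n : Fin m => X n ω < B)
      rw [Finset.card_univ, Fintype.card_fin] at this
      exact_mod_cast this
    have hkey : B * m - (B - L) * (F.card : ℝ) ≤ ∑ i, X i ω := by
      rw [← hsplit]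
      nlinarith [hbound1, hbound2.ge, hbound2.le, hcards]
    -- algebra
    have hLB1 : (1:ℝ) - L / B ≠ 0 := by
      have : L / B < 1 := (div_lt_one hB).2 hLB
      linarith
    have hBLne : B - L ≠ 0 := sub_ne_zero.2 hLB.ne'
    have hcBL : c * (B - L) = B * (1 - Δ * (1 + lamt)) := by
      rw [hc]
      field_simp
    have hεc : c * m * (B - L) = B * m - ε := by
      rw [hε_def]
      linear_combination (m : ℝ) * hcBL
    show c * (m : ℝ) ≤ (K ω : ℝ)
    rw [hKF]
    have hlt : c * m * (B - L) < (B - L) * (F.card : ℝ) := by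
      rw [hεc]
      linarith [hkey, hSlt]
    rw [mul_comm (B - L) ((F.card : ℝ))] at hlt
    exact (lt_of_mul_lt_mul_right hlt (sub_pos.2 hLB).le).le
  -- conclude
  have hcompl : ENNReal.ofReal (1 - lam) ≤ μ Aᶜ := by
    rw [prob_compl_eq_one_sub hAmeas]
    have h1 : ENNReal.ofReal (1 - lam) = 1 - ENNReal.ofReal lam := by
      rw [ENNReal.ofReal_sub _ hlam0.le, ENNReal.ofReal_one]
    rw [h1]
    exact tsub_le_tsub_left hμA 1
  exact hcompl.trans (measure_mono_ae hsub)
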